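/- Let G = (V, E) with V = {v_1, …, v_n} be an input network, let g_{v_1}, …, g_{v_n} : ℕ → ℝ be nondecreasing nonnegative functions, let c ≥ 0 be a common investment cost, let a ≥ 0, and let H = (V, E') be a directed altruistic network whose every edge joins G-adjacent vertices. Construct the graph G' = (V', E'') with V' = ⋃_{i∈[n]} V_i ∪ {u_i : i∈[n]}, where V_i = {v^i_j : j ∈ [2+n(i−1)]}, and E'' = ⋃_{i∈[n]} {{u_i, v^i_j} : j ∈ [2+n(i−1)]} ∪ {{u_i,u_j} : {v_i,v_j} ∈ E}; let H' be the directed graph on V' with edge set {(u_i,u_j) : (v_i,v_j) ∈ E'}; let g : ℕ → ℝ be defined by g(x) = c·x for x ∈ {0,1,2} and g(x) = g(x−1) + Δg_{v_{f(x−1)}}(h(x−1)) for x > 2, where f(x) = 1 + ⌊(x−2)/n⌋ and h(x) = x − (2 + n(f(x)−1)). Given x = (x_{v_i})_{i∈[n]} ∈ {0,1}^V, define x' ∈ {0,1}^{V'} by x'_{u_i} = x_{v_i} for all i∈[n] and x'_w = 1 for all w ∈ V' \ {u_i : i∈[n]}. Then x is a pure strategy Nash equilibrium of the heterogeneous BNPG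 game with asymmetric altruism (G, H, (g_{v_i}), c, a) if and only if x' is a pure strategy Nash equilibrium of the fully homogeneous BNPG game with asymmetric altruism (G', H', g, c, a) in which every player has externality function g and cost c. -/

import Mathlib

open Finset

/-- `Δg(t) = g(t+1) - g(t)`. -/
def dg (g : ℕ → ℝ) (t : ℕ) : ℝ := g (t + 1) - g t

/-- Number of `G`-neighbors of `v` playing 1 in the profile `x`. -/
def nv {W : Type*} [Fintype W] [DecidableEq W] (G : SimpleGraph W) [DecidableRel G.Adj]
    (x : W → Bool) (v : W) : ℕ :=
  ((G.neighborFinset v).filter (fun u => x u = true)).card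

/-- Utility of player `v` in a BNPG game with altruism: input graph `G`,
altruistic (out-)neighborhoods `N`, externality functions `g`, costs `c`,
altruism parameter `a`. -/
def util {W : Type*} [Fintype W] [DecidableEq W] (G : SimpleGraph W) [DecidableRel G.Adj]
    (N : W → Finset W) (g : W → ℕ → ℝ) (c : W → ℝ) (a : ℝ)
    (x : W → Bool) (v : W) : ℝ :=
  g v ((x v).toNat + nv G x v)
    + a * ∑ u ∈ N v, g u ((x u).toNat + nv G x u)
    - c v * (x v).toNat

/-- Pure strategy Nash equilibrium of a BNPG game with altruism. -/
def isPSNE {W : Type*} [Fintype W] [DecidableEq W] (G : SimpleGraph W) [DecidableRel G.Adj]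
    (N : W → Finset W) (g : W → ℕ → ℝ) (c : W → ℝ) (a : ℝ) (x : W → Bool) : Prop :=
  ∀ v : W, ∀ b : Bool,
    util G N g c a x v ≥ util G N g c a (Function.update x v b) v

def fIdx (n x : ℕ) : ℕ := 1 + (x - 2) / n

def hOff (n x : ℕ) : ℕ := x - (2 + n * (fIdx n x - 1))

/-- The common externality function of the fully homogeneous game. -/
def gg (n : ℕ) (gv : ℕ → ℕ → ℝ) (c : ℝ) : ℕ → ℝ
  | 0 => 0
  | 1 => c
  | 2 => c * 2
  | x + 3 => gg n gv c (x + 2) + dg (gv (fIdx n (x + 2))) (hOff n (x + 2))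

/-- Vertex set of the constructed fully homogeneous game: `Sum.inl ⟨i, j⟩` is the
`j`-th pendant leaf `v^i_j` attached to `u_i` (player `i : Fin n` stands for
`v_{i+1}`, and it gets `2 + n·i` leaves), and `Sum.inr i` is `u_i`. -/
abbrev Vred (n : ℕ) := (Σ i : Fin n, Fin (2 + n * i.val)) ⊕ Fin n

/-- Adjacency of the constructed input network: each `u_i` is adjacent to its own
leaves, and `u_i ~ u_j` iff `v_i ~ v_j` in the original network. -/
def adjRed {n : ℕ} (G : SimpleGraph (Fin n)) [DecidableRel G.Adj] :
    Vred n → Vred n → Bool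
  | Sum.inl ⟨i, _⟩, Sum.inr j => decide (i = j)
  | Sum.inr j, Sum.inl ⟨i, _⟩ => decide (i = j)
  | Sum.inr i, Sum.inr j => decide (G.Adj i j)
  | _, _ => false

/-- The constructed input network `G'`. -/
def Gred {n : ℕ} (G : SimpleGraph (Fin n)) [DecidableRel G.Adj] :
    SimpleGraph (Vred n) where
  Adj a b := adjRed G a b = true
  symm := by
    constructor
    rintro (⟨i, ji⟩ | i) (⟨i', ji'⟩ | i') h <;> simp_all [adjRed]
    exact h.symm
  loopless := by
    constructor
    rintro (⟨i, ji⟩ | i) h <;> simp [adjRed] at h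

instance {n : ℕ} (G : SimpleGraph (Fin n)) [DecidableRel G.Adj] :
    DecidableRel (Gred G).Adj :=
  fun a b => inferInstanceAs (Decidable (adjRed G a b = true))

/-- The constructed altruistic network `H'`: `(u_i, u_j)` is an altruistic edge iff
`(v_i, v_j)` was one; leaves have no altruistic edges. -/
def Nred {n : ℕ} (N : Fin n → Finset (Fin n)) : Vred n → Finset (Vred n)
  | Sum.inl _ => ∅
  | Sum.inr i => (N i).image Sum.inr

section aux
variable {n : ℕ}

def xext (y : Fin n → Bool) : Vred n → Bool
  | Sum.inl _ => true
  | Sum.inr i => y i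

@[simp] lemma xext_inr (y : Fin n → Bool) (i : Fin n) : xext y (Sum.inr i) = y i := rfl
@[simp] lemma xext_inl (y : Fin n → Bool) (l : Σ i : Fin n, Fin (2 + n * i.val)) :
    xext y (Sum.inl l) = true := rfl

lemma xext_update (y : Fin n → Bool) (i : Fin n) (b : Bool) :
    xext (Function.update y i b) = Function.update (xext y) (Sum.inr i) b := by
  funext v
  rcases v with l | j
  · simp [xext, Function.update]
  · by_cases h : j = i <;> simp [xext, Function.update, h]

lemma nv_update_self {W : Type*} [Fintype W] [DecidableEq W] (G : SimpleGraph W)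
    [DecidableRel G.Adj] (x : W → Bool) (v : W) (b : Bool) :
    nv G (Function.update x v b) v = nv G x v := by
  unfold nv
  congr 1
  apply Finset.filter_congr
  intro u hu
  rw [SimpleGraph.mem_neighborFinset] at hu
  rw [Function.update_of_ne (G.ne_of_adj hu).symm]

lemma nv_update_adj {W : Type*} [Fintype W] [DecidableEq W] (G : SimpleGraph W)
    [DecidableRel G.Adj] (x : W → Bool) (i w : W) (hadj : G.Adj w i) (hx : x i = false) :
    nv G (Function.update x i true) w = nv G x w + 1 := by
  unfold nv
  have h1 : ((G.neighborFinset w).filter (fun u => Function.update x i true u = true))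
      = insert i ((G.neighborFinset w).filter (fun u => x u = true)) := by
    ext u
    by_cases h : u = i
    · subst h
      simp [SimpleGraph.mem_neighborFinset, hadj]
    · simp [Finset.mem_filter, Function.update_of_ne h, h]
  rw [h1, Finset.card_insert_of_notMem]
  simp [hx]

lemma nv_lt (G : SimpleGraph (Fin n)) [DecidableRel G.Adj] (y : Fin n → Bool) (i : Fin n) :
    nv G y i < n := by
  have h1 : nv G y i ≤ G.degree i := Finset.card_filter_le _ _
  have h2 : G.degree i < Fintype.card (Fin n) := G.degree_lt_card_verts i
  simpa using lt_of_le_of_lt h1 (by simpa using h2)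

lemma nv_lt' (G : SimpleGraph (Fin n)) [DecidableRel G.Adj] (y : Fin n → Bool) (i j : Fin n)
    (hadj : G.Adj j i) (hy : y i = false) : nv G y j + 1 < n := by
  have hss : ((G.neighborFinset j).filter (fun u => y u = true)) ⊂ G.neighborFinset j := by
    refine Finset.ssubset_iff_of_subset (Finset.filter_subset _ _) |>.2 ⟨i, ?_, ?_⟩
    · simpa [SimpleGraph.mem_neighborFinset] using hadj
    · simp [hy]
  have h1 : nv G y j < G.degree j := Finset.card_lt_card hss
  have h2 : G.degree j < Fintype.card (Fin n) := G.degree_lt_card_verts j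
  simp only [Fintype.card_fin] at h2
  omega

end aux

section aux2
variable {n : ℕ} (G : SimpleGraph (Fin n)) [DecidableRel G.Adj]

lemma nv_inr (y : Fin n → Bool) (i : Fin n) :
    nv (Gred G) (xext y) (Sum.inr i) = 2 + n * i.val + nv G y i := by
  unfold nv
  rw [SimpleGraph.neighborFinset_eq_filter, Finset.filter_filter,
      SimpleGraph.neighborFinset_eq_filter, Finset.filter_filter]
  rw [Finset.card_filter, Finset.card_filter]
  rw [Fintype.sum_sum_type]
  congr 1
  · rw [← Finset.univ_sigma_univ, Finset.sum_sigma]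
    simp only [Gred, adjRed, xext]
    simp only [decide_eq_true_eq, and_true]
    have : ∀ x : Fin n, (∑ _x1 : Fin (2 + n * x.val), if x = i then (1:ℕ) else 0)
        = if x = i then 2 + n * x.val else 0 := by
      intro x; by_cases h : x = i <;> simp [h]
    simp only [this]
    simp
  · simp only [Gred, adjRed, xext]
    simp

lemma nv_inl (y : Fin n → Bool) (l : Σ i : Fin n, Fin (2 + n * i.val)) :
    nv (Gred G) (xext y) (Sum.inl l) = (y l.1).toNat := by
  obtain ⟨i, j⟩ := l
  unfold nv
  rw [SimpleGraph.neighborFinset_eq_filter, Finset.filter_filter, Finset.card_filter,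
      Fintype.sum_sum_type]
  simp only [Gred, adjRed, xext]
  rw [← Finset.univ_sigma_univ, Finset.sum_sigma]
  simp only [decide_eq_true_eq]
  have : ∀ x : Fin n, (if i = x ∧ y x = true then (1:ℕ) else 0)
      = if x = i then (y i).toNat else 0 := by
    intro x
    by_cases h : x = i
    · subst h; cases hx : y x <;> simp [hx]
    · simp only [h, if_false]
      rw [if_neg]
      rintro ⟨h', -⟩; exact h h'.symm
  simp only [this]
  simp

lemma gg_step (gv : ℕ → ℕ → ℝ) (c : ℝ) (i t : ℕ) (hn : 1 ≤ n) (ht : t < n) :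
    gg n gv c (2 + n * i + t + 1) = gg n gv c (2 + n * i + t) + dg (gv (i + 1)) t := by
  have h1 : 2 + n * i + t + 1 = (n * i + t) + 3 := by ring
  have h2 : 2 + n * i + t = (n * i + t) + 2 := by ring
  rw [h1, h2]
  show gg n gv c ((n * i + t) + 2) + dg (gv (fIdx n (n * i + t + 2))) (hOff n (n * i + t + 2)) = _
  have hf : fIdx n (n * i + t + 2) = i + 1 := by
    unfold fIdx
    have : n * i + t + 2 - 2 = n * i + t := by omega
    rw [this, Nat.mul_comm, Nat.add_comm (i * n) t]
    rw [Nat.add_mul_div_right _ _ (show 0 < n by omega), Nat.div_eq_of_lt ht]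
    omega
  have hh : hOff n (n * i + t + 2) = t := by
    unfold hOff
    rw [hf]
    simp
    omega
  rw [hf, hh]

variable (N : Fin n → Finset (Fin n)) (gv : ℕ → ℕ → ℝ) (c a : ℝ)

lemma util_homo_inr (y : Fin n → Bool) (i : Fin n) :
    util (Gred G) (Nred N) (fun _ => gg n gv c) (fun _ => c) a (xext y) (Sum.inr i)
      = gg n gv c ((y i).toNat + (2 + n * i.val + nv G y i))
        + a * ∑ j ∈ N i, gg n gv c ((y j).toNat + (2 + n * j.val + nv G y j))
        - c * (y i).toNat := by
  unfold util
  rw [nv_inr, xext_inr]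
  congr 2
  show a * ∑ u ∈ (N i).image Sum.inr, _ = _
  congr 1
  rw [Finset.sum_image (by intro p hp q hq h; simpa using h)]
  refine Finset.sum_congr rfl ?_
  intro j hj
  rw [xext_inr, nv_inr]

lemma util_het (y : Fin n → Bool) (i : Fin n) :
    util G N (fun i => gv (i.val + 1)) (fun _ => c) a y i
      = gv (i.val + 1) ((y i).toNat + nv G y i)
        + a * ∑ j ∈ N i, gv (j.val + 1) ((y j).toNat + nv G y j)
        - c * (y i).toNat := rfl

lemma sum_dg (s : Finset (Fin n)) (t : Fin n → ℕ) :
    ∑ j ∈ s, dg (gv (j.val + 1)) (t j)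
      = (∑ j ∈ s, gv (j.val + 1) (t j + 1)) - ∑ j ∈ s, gv (j.val + 1) (t j) := by
  simp [dg, Finset.sum_sub_distrib]

lemma het_flip (hN : ∀ v : Fin n, ∀ u ∈ N v, G.Adj v u) (y : Fin n → Bool) (i : Fin n)
    (hy : y i = false) :
    util G N (fun i => gv (i.val + 1)) (fun _ => c) a (Function.update y i true) i
      = util G N (fun i => gv (i.val + 1)) (fun _ => c) a y i
        + (dg (gv (i.val + 1)) (nv G y i)
           + a * ∑ j ∈ N i, dg (gv (j.val + 1)) ((y j).toNat + nv G y j) - c) := by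
  rw [util_het, util_het, nv_update_self, Function.update_self, hy]
  have hsum : ∀ j ∈ N i,
      (Function.update y i true j).toNat + nv G (Function.update y i true) j
        = ((y j).toNat + nv G y j) + 1 := by
    intro j hj
    have hadj := hN i j hj
    have hne : j ≠ i := fun h => G.loopless.irrefl i (h ▸ hadj)
    rw [Function.update_of_ne hne, nv_update_adj G y i j hadj.symm hy]
    omega
  rw [Finset.sum_congr rfl (fun j hj => by rw [hsum j hj])]
  rw [sum_dg]
  simp only [Bool.toNat_true, Bool.toNat_false, dg]
  ring_nf

lemma homo_flip (hn : 1 ≤ n) (hN : ∀ v : Fin n, ∀ u ∈ N v, G.Adj v u)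
    (y : Fin n → Bool) (i : Fin n) (hy : y i = false) :
    util (Gred G) (Nred N) (fun _ => gg n gv c) (fun _ => c) a
        (xext (Function.update y i true)) (Sum.inr i)
      = util (Gred G) (Nred N) (fun _ => gg n gv c) (fun _ => c) a (xext y) (Sum.inr i)
        + (dg (gv (i.val + 1)) (nv G y i)
           + a * ∑ j ∈ N i, dg (gv (j.val + 1)) ((y j).toNat + nv G y j) - c) := by
  rw [util_homo_inr, util_homo_inr, nv_update_self, Function.update_self, hy]
  have hown : gg n gv c ((true : Bool).toNat + (2 + n * i.val + nv G y i))
      = gg n gv c ((false : Bool).toNat + (2 + n * i.val + nv G y i))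
        + dg (gv (i.val + 1)) (nv G y i) := by
    have e1 : (true : Bool).toNat + (2 + n * i.val + nv G y i)
        = 2 + n * i.val + nv G y i + 1 := by simp; ring
    have e2 : (false : Bool).toNat + (2 + n * i.val + nv G y i)
        = 2 + n * i.val + nv G y i := by simp
    rw [e1, e2, gg_step gv c i.val (nv G y i) hn (nv_lt G y i)]
  have hsum : ∀ j ∈ N i,
      gg n gv c ((Function.update y i true j).toNat
          + (2 + n * j.val + nv G (Function.update y i true) j))
        = gg n gv c ((y j).toNat + (2 + n * j.val + nv G y j))
          + dg (gv (j.val + 1)) ((y j).toNat + nv G y j) := by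
    intro j hj
    have hadj := hN i j hj
    have hne : j ≠ i := fun h => G.loopless.irrefl i (h ▸ hadj)
    rw [Function.update_of_ne hne, nv_update_adj G y i j hadj.symm hy]
    have e1 : (y j).toNat + (2 + n * j.val + (nv G y j + 1))
        = 2 + n * j.val + ((y j).toNat + nv G y j) + 1 := by ring
    have e2 : (y j).toNat + (2 + n * j.val + nv G y j)
        = 2 + n * j.val + ((y j).toNat + nv G y j) := by ring
    have ht : (y j).toNat + nv G y j < n := by
      have := nv_lt' G y i j hadj.symm hy
      cases y j <;> simp <;> omega
    rw [e1, e2, gg_step gv c j.val _ hn ht]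
  rw [Finset.sum_congr rfl (fun j hj => by rw [hsum j hj])]
  rw [hown, Finset.sum_add_distrib]
  simp only [Bool.toNat_true, Bool.toNat_false]
  ring

lemma leaf_ge (y : Fin n → Bool) (l : Σ i : Fin n, Fin (2 + n * i.val)) (b : Bool) :
    util (Gred G) (Nred N) (fun _ => gg n gv c) (fun _ => c) a (xext y) (Sum.inl l)
      ≥ util (Gred G) (Nred N) (fun _ => gg n gv c) (fun _ => c) a
          (Function.update (xext y) (Sum.inl l) b) (Sum.inl l) := by
  unfold util
  rw [nv_update_self, nv_inl, Function.update_self, xext_inl]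
  have hN : Nred N (Sum.inl l) = ∅ := rfl
  rw [hN, Finset.sum_empty]
  have g0 : gg n gv c 0 = 0 := rfl
  have g1 : gg n gv c 1 = c := rfl
  have g2 : gg n gv c 2 = c * 2 := rfl
  cases b <;> cases hl : y l.1 <;>
    simp only [hl, Bool.toNat_true, Bool.toNat_false] <;> norm_num <;>
    simp [g0, g1, g2] <;> linarith

end aux2

/-- `x` is a PSNE of the heterogeneous BNPG game with asymmetric
altruism `(G, N, (g_{v_i}), c, a)` (player `i : Fin n` has externality function
`gv (i+1)` and cost `c`) iff the profile `x'` — equal to `x` on the `u_i`'s and to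
`1` on all leaves — is a PSNE of the fully homogeneous BNPG game with asymmetric
altruism `(G', H', g, c, a)`. -/
theorem statement12 (n : ℕ) (hn : 1 ≤ n)
    (G : SimpleGraph (Fin n)) [DecidableRel G.Adj]
    (N : Fin n → Finset (Fin n)) (hN : ∀ v : Fin n, ∀ u ∈ N v, G.Adj v u)
    (gv : ℕ → ℕ → ℝ) (hmono : ∀ i, Monotone (gv i)) (hnn : ∀ i t, 0 ≤ gv i t)
    (c : ℝ) (hc : 0 ≤ c) (a : ℝ) (ha : 0 ≤ a)
    (x : Fin n → Bool) :
    isPSNE G N (fun i => gv (i.val + 1)) (fun _ => c) a x ↔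
      isPSNE (Gred G) (Nred N) (fun _ => gg n gv c) (fun _ => c) a
        (fun v => match v with
          | Sum.inl _ => true
          | Sum.inr i => x i) := by
  have hxx : (fun v => match v with
      | Sum.inl _ => true
      | Sum.inr i => x i) = xext x := by
    funext v; cases v <;> rfl
  rw [hxx]
  constructor
  · intro hx v b
    rcases v with l | i
    · exact leaf_ge G N gv c a x l b
    · rw [← xext_update]
      by_cases hb : b = x i
      · subst hb
        rw [Function.update_eq_self]
      · cases hxi : x i
        · have hb' : b = true := by rw [hxi] at hb; cases b <;> simp_all
          subst hb'
          have hd := homo_flip G N gv c a hn hN x i hxi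
          have hh := het_flip G N gv c a hN x i hxi
          have hge := hx i true
          rw [hh] at hge
          linarith
        · have hb' : b = false := by rw [hxi] at hb; cases b <;> simp_all
          subst hb'
          set y := Function.update x i false with hy_def
          have hy : y i = false := Function.update_self i false x
          have hx' : Function.update y i true = x := by
            funext j
            by_cases h : j = i
            · subst h; simp [hy_def, hxi]
            · simp [hy_def, Function.update_of_ne h]
          have hd := homo_flip G N gv c a hn hN y i hy
          have hh := het_flip G N gv c a hN y i hy
          rw [hx'] at hd hh
          have hge := hx i false
          linarith
  · intro hom i b
    by_cases hb : b = x i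
    · subst hb
      rw [Function.update_eq_self]
    · cases hxi : x i
      · have hb' : b = true := by rw [hxi] at hb; cases b <;> simp_all
        subst hb'
        have hd := homo_flip G N gv c a hn hN x i hxi
        have hh := het_flip G N gv c a hN x i hxi
        have hge := hom (Sum.inr i) true
        rw [← xext_update] at hge
        linarith
      · have hb' : b = false := by rw [hxi] at hb; cases b <;> simp_all
        subst hb'
        set y := Function.update x i false with hy_def
        have hy : y i = false := Function.update_self i false x
        have hx' : Function.update y i true = x := by
          funext j
          by_cases h : j = i
          · subst h; simp [hy_def, hxi]
          · simp [hy_def, Function.update_of_ne h]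
        have hd := homo_flip G N gv c a hn hN y i hy
        have hh := het_flip G N gv c a hN y i hy
        rw [hx'] at hd hh
        have hge := hom (Sum.inr i) false
        rw [← xext_update] at hge
        linarith
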